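/- Let Ġ be a signed graph of order n with balanced clique number ω_b(Ġ). Then the largest eigenvalue of A(Ġ) satisfies λ₁(Ġ) ≤ (1 - 1/ω_b(Ġ))·n. -/

import Mathlib

open Matrix

/-- The signed adjacency matrix of a signed graph `(G, σ)`. -/
def signedAdj {V : Type*} (G : SimpleGraph V) [DecidableRel G.Adj]
    (σ : V → V → ℝ) : Matrix V V ℝ :=
  fun u v => if G.Adj u v then σ u v else 0

/-- A balanced clique of a signed graph: a set of pairwise adjacent vertices such that
every triangle inside it has positive sign (equivalently, the induced signed complete
graph is balanced). -/
def IsBalancedClique {V : Type*} (G : SimpleGraph V) (σ : V → V → ℝ) (s : Finset V) : Prop :=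
  (∀ u ∈ s, ∀ v ∈ s, u ≠ v → G.Adj u v) ∧
    (∀ a ∈ s, ∀ b ∈ s, ∀ c ∈ s, a ≠ b → b ≠ c → a ≠ c → σ a b * σ b c * σ c a = 1)

/-- The balanced clique number of a signed graph: the maximum order of a balanced clique. -/
noncomputable def balancedCliqueNum {V : Type*} (G : SimpleGraph V) (σ : V → V → ℝ) : ℕ :=
  sSup {k | ∃ s : Finset V, s.card = k ∧ IsBalancedClique G σ s}

section MSAux
open Finset

lemma sum_indicator_diff {n : ℕ} (i j : Fin n) (f : Fin n → ℝ) :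
    ∑ u, ((if u = i then (1:ℝ) else 0) - (if u = j then 1 else 0)) * f u = f i - f j := by
  have : ∀ u, ((if u = i then (1:ℝ) else 0) - (if u = j then 1 else 0)) * f u
      = (if u = i then f u else 0) - (if u = j then f u else 0) := by
    intro u; split_ifs with h1 h2 <;> simp_all
  simp_rw [this, Finset.sum_sub_distrib, Finset.sum_ite_eq' Finset.univ, Finset.mem_univ,
    if_pos]

/-- Motzkin–Straus type bound for a 0/1 symmetric matrix with zero diagonal. -/
lemma MS_bound {n : ℕ} (B : Matrix (Fin n) (Fin n) ℝ)
    (hsymm : ∀ u v, B u v = B v u)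
    (hdiag : ∀ u, B u u = 0)
    (h01 : ∀ u v, B u v = 0 ∨ B u v = 1)
    (k : ℝ) (hk : 1 ≤ k)
    (hclq : ∀ s : Finset (Fin n), (∀ u ∈ s, ∀ v ∈ s, u ≠ v → B u v = 1) → (s.card : ℝ) ≤ k) :
    ∀ m : ℕ, ∀ x : Fin n → ℝ, (∀ u, 0 ≤ x u) →
      (Finset.univ.filter fun u => x u ≠ 0).card ≤ m →
      ∑ u, ∑ v, B u v * x u * x v ≤ (1 - 1/k) * (∑ u, x u)^2 := by
  intro m
  induction m with
  | zero =>
      intro x hx hcard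
      have hS : ∀ u, x u = 0 := by
        intro u
        by_contra h
        have : u ∈ Finset.univ.filter fun u => x u ≠ 0 := by simp [h]
        have := Finset.card_pos.mpr ⟨u, this⟩
        omega
      simp [hS]
  | succ m ih =>
      intro x hx hcard
      set S := Finset.univ.filter fun u => x u ≠ 0 with hSdef
      -- total sum equals sum over support
      have hsum_eq : ∑ u, x u = ∑ u ∈ S, x u := by
        refine (Finset.sum_subset (Finset.subset_univ S) ?_).symm
        intro u _ hu
        by_contra h; exact hu (by simp [hSdef, h])
      by_cases hclique : ∀ u ∈ S, ∀ v ∈ S, u ≠ v → B u v = 1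
      · -- support is a clique
        have hQ : ∑ u, ∑ v, B u v * x u * x v = (∑ u ∈ S, x u)^2 - ∑ u ∈ S, (x u)^2 := by
          have h1 : ∑ u, ∑ v, B u v * x u * x v = ∑ u ∈ S, ∑ v ∈ S, B u v * x u * x v := by
            refine (Finset.sum_subset (Finset.subset_univ S) ?_).symm.trans ?_
            · intro u _ hu
              have hxu : x u = 0 := by by_contra h; exact hu (by simp [hSdef, h])
              simp [hxu]
            · refine Finset.sum_congr rfl ?_
              intro u _
              refine (Finset.sum_subset (Finset.subset_univ S) ?_).symm
              intro v _ hv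
              have hxv : x v = 0 := by by_contra h; exact hv (by simp [hSdef, h])
              simp [hxv]
          rw [h1]
          have h2 : ∀ u ∈ S, ∀ v ∈ S, B u v * x u * x v
              = x u * x v - (if v = u then x u * x v else 0) := by
            intro u hu v hv
            rcases eq_or_ne u v with rfl | huv
            · simp [hdiag u]
            · rw [hclique u hu v hv huv, if_neg (Ne.symm huv)]; ring
          have key : ∀ u ∈ S, ∑ v ∈ S, B u v * x u * x v
              = x u * (∑ v ∈ S, x v) - x u ^ 2 := by
            intro u hu
            rw [Finset.sum_congr rfl (h2 u hu), Finset.sum_sub_distrib]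
            congr 1
            · exact (Finset.mul_sum S x (x u)).symm
            · rw [Finset.sum_ite_eq' S u (fun v => x u * x v), if_pos hu]; ring
          rw [Finset.sum_congr rfl key, Finset.sum_sub_distrib, ← Finset.sum_mul, sq]
        rcases Finset.eq_empty_or_nonempty S with hSe | hSne
        · simp [hQ, hsum_eq, hSe]
        · have hcS : (1:ℝ) ≤ S.card := by exact_mod_cast Finset.card_pos.mpr hSne
          have hck : (S.card : ℝ) ≤ k := hclq S hclique
          have hCS : (∑ u ∈ S, x u)^2 ≤ S.card * ∑ u ∈ S, (x u)^2 :=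
            sq_sum_le_card_mul_sum_sq
          have hc0 : (0:ℝ) < S.card := lt_of_lt_of_le one_pos hcS
          have h3 : (∑ u ∈ S, x u)^2 / S.card ≤ ∑ u ∈ S, (x u)^2 := by
            rw [div_le_iff₀ hc0]
            linarith [hCS]
          have h4 : (1:ℝ)/k ≤ 1/S.card := by
            apply one_div_le_one_div_of_le hc0 hck
          have hsq : (0:ℝ) ≤ (∑ u ∈ S, x u)^2 := sq_nonneg _
          rw [hQ, hsum_eq]
          have : (1/S.card) * (∑ u ∈ S, x u)^2 ≤ ∑ u ∈ S, (x u)^2 := by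
            rw [one_div, inv_mul_eq_div]; exact h3
          nlinarith [mul_le_mul_of_nonneg_right h4 hsq]
      · -- not a clique: shift mass and induct
        push_neg at hclique
        obtain ⟨i, hi, j, hj, hij, hBij⟩ := hclique
        have hBij0 : B i j = 0 := (h01 i j).resolve_right hBij
        have hBji0 : B j i = 0 := by rw [hsymm j i]; exact hBij0
        set r : Fin n → ℝ := fun u => ∑ v, B u v * x v with hrdef
        -- step: given a b in S with B a b = 0 and r b ≤ r a, conclude
        have step : ∀ a b : Fin n, a ≠ b → a ∈ S → b ∈ S → B a b = 0 → B b a = 0 →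
            r b ≤ r a → ∑ u, ∑ v, B u v * x u * x v ≤ (1 - 1/k) * (∑ u, x u)^2 := by
          intro a b hab haS hbS hBab hBba hr
          set t := x b with htdef
          set d : Fin n → ℝ := fun u => (if u = a then 1 else 0) - (if u = b then 1 else 0)
            with hddef
          set x' : Fin n → ℝ := fun u => x u + t * d u with hx'def
          have hx'a : x' a = x a + x b := by simp [hx'def, hddef, if_neg hab, htdef]
          have hx'b : x' b = 0 := by simp [hx'def, hddef, Ne.symm hab, htdef]
          have hx'other : ∀ u, u ≠ a → u ≠ b → x' u = x u := by
            intro u h1 h2; simp [hx'def, hddef, h1, h2]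
          have hx'nonneg : ∀ u, 0 ≤ x' u := by
            intro u
            rcases eq_or_ne u a with rfl | h1
            · rw [hx'a]; exact add_nonneg (hx u) (hx b)
            · rcases eq_or_ne u b with rfl | h2
              · rw [hx'b]
              · rw [hx'other u h1 h2]; exact hx u
          have hsum' : ∑ u, x' u = ∑ u, x u := by
            simp_rw [hx'def]
            rw [Finset.sum_add_distrib]
            have : ∑ u, t * d u = 0 := by
              rw [← Finset.mul_sum]
              have : ∑ u, d u = 0 := by
                have := sum_indicator_diff a b (fun _ => (1:ℝ))
                simpa [hddef] using this
              rw [this, mul_zero]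
            rw [this, add_zero]
          -- support shrinks
          have hcard' : (Finset.univ.filter fun u => x' u ≠ 0).card ≤ m := by
            have hsub : (Finset.univ.filter fun u => x' u ≠ 0) ⊆ S.erase b := by
              intro u hu
              simp only [Finset.mem_filter, Finset.mem_univ, true_and] at hu
              rcases eq_or_ne u b with rfl | hub
              · exact absurd hx'b hu
              · refine Finset.mem_erase.mpr ⟨hub, ?_⟩
                rcases eq_or_ne u a with rfl | hua
                · exact haS
                · rw [hx'other u hua hub] at hu
                  simp [hSdef, hu]
            have := Finset.card_le_card hsub
            have h2 := Finset.card_erase_of_mem hbS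
            omega
          -- quadratic form does not decrease
          have hQle : ∑ u, ∑ v, B u v * x u * x v ≤ ∑ u, ∑ v, B u v * x' u * x' v := by
            have hexp : ∀ u v, B u v * x' u * x' v
                = B u v * x u * x v + (t * d u) * (B u v * x v)
                  + (t * d v) * (B v u * x u) + t * t * (d u * (B u v * d v)) := by
              intro u v
              simp only [hx'def]
              rw [hsymm v u]
              ring
            simp_rw [hexp, Finset.sum_add_distrib]
            have hdr : ∑ u, d u * r u = r a - r b := by
              simp only [hddef]; exact sum_indicator_diff a b r
            have e1 : ∑ u, ∑ v, (t * d u) * (B u v * x v) = t * (r a - r b) := by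
              calc ∑ u, ∑ v, (t * d u) * (B u v * x v)
                  = ∑ u, (t * d u) * ∑ v, (B u v * x v) := by
                    exact Finset.sum_congr rfl fun u _ => (Finset.mul_sum _ _ _).symm
                _ = ∑ u, t * (d u * r u) := by
                    exact Finset.sum_congr rfl fun u _ => by simp only [hrdef]; ring
                _ = t * ∑ u, d u * r u := (Finset.mul_sum _ _ _).symm
                _ = t * (r a - r b) := by rw [hdr]
            have e2 : ∑ u, ∑ v, (t * d v) * (B v u * x u) = t * (r a - r b) := by
              rw [Finset.sum_comm]
              calc ∑ v, ∑ u, (t * d v) * (B v u * x u)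
                  = ∑ v, (t * d v) * ∑ u, (B v u * x u) := by
                    exact Finset.sum_congr rfl fun v _ => (Finset.mul_sum _ _ _).symm
                _ = ∑ v, t * (d v * r v) := by
                    exact Finset.sum_congr rfl fun v _ => by simp only [hrdef]; ring
                _ = t * ∑ v, d v * r v := (Finset.mul_sum _ _ _).symm
                _ = t * (r a - r b) := by rw [hdr]
            have e3 : ∑ u, ∑ v, t * t * (d u * (B u v * d v)) = 0 := by
              have inner : ∀ u, ∑ v, B u v * d v = B u a - B u b := by
                intro u
                calc ∑ v, B u v * d v = ∑ v, d v * B u v :=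
                      Finset.sum_congr rfl fun v _ => mul_comm _ _
                  _ = B u a - B u b := by
                      simp only [hddef]; exact sum_indicator_diff a b (fun v => B u v)
              calc ∑ u, ∑ v, t * t * (d u * (B u v * d v))
                  = ∑ u, (t * t * d u) * ∑ v, (B u v * d v) := by
                    refine Finset.sum_congr rfl fun u _ => ?_
                    rw [Finset.mul_sum]
                    exact Finset.sum_congr rfl fun v _ => by ring
                _ = ∑ u, (t * t) * (d u * (B u a - B u b)) := by
                    exact Finset.sum_congr rfl fun u _ => by rw [inner u]; ring
                _ = (t * t) * ∑ u, d u * (B u a - B u b) := (Finset.mul_sum _ _ _).symm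
                _ = 0 := by
                    have : ∑ u, d u * (B u a - B u b) = (B a a - B a b) - (B b a - B b b) := by
                      simp only [hddef]; exact sum_indicator_diff a b (fun u => B u a - B u b)
                    rw [this, hdiag a, hdiag b, hBab, hBba]; ring
            rw [e1, e2, e3, add_zero]
            have ht : 0 ≤ t := hx b
            nlinarith [mul_nonneg ht (sub_nonneg.mpr hr)]
          calc ∑ u, ∑ v, B u v * x u * x v ≤ ∑ u, ∑ v, B u v * x' u * x' v := hQle
            _ ≤ (1 - 1/k) * (∑ u, x' u)^2 := ih x' hx'nonneg hcard'
            _ = (1 - 1/k) * (∑ u, x u)^2 := by rw [hsum']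
        rcases le_total (r j) (r i) with h | h
        · exact step i j hij hi hj hBij0 hBji0 h
        · exact step j i (Ne.symm hij) hj hi hBji0 hBij0 h

end MSAux

/-- Every eigenvalue of a signed graph of order `n` is at most `(1 - 1/ω_b) * n`, where
`ω_b` is the balanced clique number. -/
theorem signed_eigenvalue_le_balancedCliqueNum_bound (n : ℕ)
    (G : SimpleGraph (Fin n)) [DecidableRel G.Adj] (σ : Fin n → Fin n → ℝ)
    (hσsymm : ∀ u v, σ u v = σ v u)
    (hσsign : ∀ u v, G.Adj u v → σ u v = 1 ∨ σ u v = -1)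
    (μ : ℝ) (hμ : μ ∈ spectrum ℝ (signedAdj G σ)) :
    μ ≤ (1 - 1 / (balancedCliqueNum G σ : ℝ)) * n := by
  classical
  set A := signedAdj G σ with hA
  -- obtain an eigenvector
  have hμ' : μ ∈ spectrum ℝ (Matrix.toLinAlgEquiv' A) := by
    rwa [AlgEquiv.spectrum_eq]
  have hev : Module.End.HasEigenvalue (Matrix.toLinAlgEquiv' A) μ :=
    Module.End.hasEigenvalue_iff_mem_spectrum.mpr hμ'
  obtain ⟨x, hx1, hx2⟩ := hev.exists_hasEigenvector
  have heig : A.mulVec x = μ • x := by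
    have h := Module.End.mem_eigenspace_iff.mp hx1
    rwa [Matrix.toLinAlgEquiv'_apply] at h
  -- n must be positive
  rcases Nat.eq_zero_or_pos n with rfl | hn
  · exact absurd (Subsingleton.elim x 0) hx2
  -- set up signs
  set ε : Fin n → ℝ := fun u => if x u < 0 then -1 else 1 with hεdef
  have hε2 : ∀ u, ε u * ε u = 1 := by
    intro u; simp only [hεdef]; split_ifs <;> norm_num
  have hxε : ∀ u, x u = ε u * |x u| := by
    intro u; simp only [hεdef]
    rcases lt_or_ge (x u) 0 with h | h
    · rw [if_pos h, abs_of_neg h]; ring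
    · rw [if_neg (not_lt.mpr h), abs_of_nonneg h]; ring
  set y : Fin n → ℝ := fun u => |x u| with hydef
  set B : Matrix (Fin n) (Fin n) ℝ :=
    fun u v => if G.Adj u v ∧ σ u v * ε u * ε v = 1 then 1 else 0 with hBdef
  -- balanced clique number facts
  set ω := balancedCliqueNum G σ with hωdef
  have hbdd : BddAbove {k | ∃ s : Finset (Fin n), s.card = k ∧ IsBalancedClique G σ s} := by
    refine ⟨n, ?_⟩
    rintro k ⟨s, rfl, -⟩
    simpa using Finset.card_le_card (Finset.subset_univ s)
  have hω1 : 1 ≤ ω := by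
    have : (1 : ℕ) ∈ {k | ∃ s : Finset (Fin n), s.card = k ∧ IsBalancedClique G σ s} := by
      refine ⟨{⟨0, hn⟩}, by simp, ?_, ?_⟩
      · intro u hu v hv huv
        simp only [Finset.mem_singleton] at hu hv
        exact absurd (hu.trans hv.symm) huv
      · intro a ha b hb c hc hab hbc hac
        simp only [Finset.mem_singleton] at ha hb
        exact absurd (ha.trans hb.symm) hab
    exact le_csSup hbdd this
  have hωR : (1:ℝ) ≤ (ω : ℝ) := by exact_mod_cast hω1
  -- clique bound for B
  have hclq : ∀ s : Finset (Fin n), (∀ u ∈ s, ∀ v ∈ s, u ≠ v → B u v = 1) →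
      (s.card : ℝ) ≤ (ω : ℝ) := by
    intro s hs
    have hmem : ∀ u ∈ s, ∀ v ∈ s, u ≠ v → G.Adj u v ∧ σ u v * ε u * ε v = 1 := by
      intro u hu v hv huv
      have := hs u hu v hv huv
      by_contra h
      simp only [hBdef, if_neg h] at this
      norm_num at this
    have hbc : IsBalancedClique G σ s := by
      constructor
      · intro u hu v hv huv; exact (hmem u hu v hv huv).1
      · intro a ha b hb c hc hab hbc hac
        have h1 : σ a b * ε a * ε b = 1 := (hmem a ha b hb hab).2
        have h2 : σ b c * ε b * ε c = 1 := (hmem b hb c hc hbc).2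
        have h3 : σ a c * ε a * ε c = 1 := (hmem a ha c hc hac).2
        have e1 : σ a b = ε a * ε b := by
          linear_combination (ε a * ε b) * h1 - σ a b * (ε b * ε b) * (hε2 a)
            - σ a b * (hε2 b)
        have e2 : σ b c = ε b * ε c := by
          linear_combination (ε b * ε c) * h2 - σ b c * (ε c * ε c) * (hε2 b)
            - σ b c * (hε2 c)
        have e3 : σ c a = ε c * ε a := by
          have h3' : σ c a * ε a * ε c = 1 := by rw [← hσsymm a c]; exact h3
          linear_combination (ε a * ε c) * h3' - σ c a * (ε c * ε c) * (hε2 a)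
            - σ c a * (hε2 c)
        calc σ a b * σ b c * σ c a = (ε a * ε b) * (ε b * ε c) * (ε c * ε a) := by
              rw [e1, e2, e3]
          _ = (ε a * ε a) * (ε b * ε b) * (ε c * ε c) := by ring
          _ = 1 := by rw [hε2, hε2, hε2]; ring
    have : s.card ≤ ω := le_csSup hbdd ⟨s, rfl, hbc⟩
    exact_mod_cast this
  -- B dominates A pointwise against |x|
  have hdom : ∀ u v, A u v * x u * x v ≤ B u v * y u * y v := by
    intro u v
    by_cases hadj : G.Adj u v
    · have hA' : A u v = σ u v := by simp [hA, signedAdj, hadj]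
      have hx' : A u v * x u * x v = (σ u v * ε u * ε v) * (y u * y v) := by
        rw [hA', hxε u, hxε v, hydef]; ring
      by_cases hpos : σ u v * ε u * ε v = 1
      · rw [hx', hpos]; simp only [hBdef]; simp [hadj, hpos, hydef]
      · have hεu : ε u = 1 ∨ ε u = -1 := by
          simp only [hεdef]; split_ifs <;> simp
        have hεv : ε v = 1 ∨ ε v = -1 := by
          simp only [hεdef]; split_ifs <;> simp
        have hneg : σ u v * ε u * ε v = -1 := by
          rcases hσsign u v hadj with h | h <;> rcases hεu with h1 | h1 <;>
            rcases hεv with h2 | h2 <;> rw [h, h1, h2] at hpos ⊢ <;> revert hpos <;> norm_num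
        have hB0 : B u v = 0 := by simp only [hBdef]; simp [hpos]
        rw [hx', hneg, hB0]
        have : 0 ≤ y u * y v := mul_nonneg (abs_nonneg _) (abs_nonneg _)
        nlinarith
    · have hA0 : A u v = 0 := by simp [hA, signedAdj, hadj]
      have hB0 : B u v = 0 := by simp only [hBdef]; simp [hadj]
      rw [hA0, hB0]; simp
  -- main computation
  have hT : 0 < ∑ u, x u ^ 2 := by
    obtain ⟨u0, hu0⟩ := Function.ne_iff.mp hx2
    refine Finset.sum_pos' (fun u _ => sq_nonneg _) ⟨u0, Finset.mem_univ _, ?_⟩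
    have := abs_pos.mpr hu0
    nlinarith [sq_abs (x u0)]
  have hQeq : ∑ u, ∑ v, A u v * x u * x v = μ * ∑ u, x u ^ 2 := by
    have hmv : ∀ u, ∑ v, A u v * x v = μ * x u := by
      intro u
      have := congrFun heig u
      simpa [Matrix.mulVec, dotProduct] using this
    calc ∑ u, ∑ v, A u v * x u * x v
        = ∑ u, x u * ∑ v, A u v * x v := by
          refine Finset.sum_congr rfl fun u _ => ?_
          rw [Finset.mul_sum]
          exact Finset.sum_congr rfl fun v _ => by ring
      _ = ∑ u, x u * (μ * x u) := Finset.sum_congr rfl fun u _ => by rw [hmv u]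
      _ = μ * ∑ u, x u ^ 2 := by rw [Finset.mul_sum]; exact Finset.sum_congr rfl fun u _ => by ring
  have hQle : ∑ u, ∑ v, A u v * x u * x v ≤ ∑ u, ∑ v, B u v * y u * y v :=
    Finset.sum_le_sum fun u _ => Finset.sum_le_sum fun v _ => hdom u v
  have hMS : ∑ u, ∑ v, B u v * y u * y v ≤ (1 - 1/(ω:ℝ)) * (∑ u, y u)^2 := by
    refine MS_bound B ?_ ?_ ?_ (ω:ℝ) hωR hclq n y (fun u => abs_nonneg _) ?_
    · intro u v
      simp only [hBdef]
      rw [if_congr (and_congr (G.adj_comm u v)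
        (by rw [hσsymm u v, mul_right_comm])) rfl rfl]
    · intro u; simp only [hBdef]; simp [G.loopless.irrefl u]
    · intro u v; simp only [hBdef]; split_ifs <;> simp
    · simpa using Finset.card_le_card
        (Finset.subset_univ (Finset.univ.filter fun u => y u ≠ 0))
  have hCS : (∑ u, y u)^2 ≤ (n:ℝ) * ∑ u, y u ^ 2 := by
    have := sq_sum_le_card_mul_sum_sq (s := Finset.univ) (f := y)
    simpa using this
  have hyx : ∑ u, y u ^ 2 = ∑ u, x u ^ 2 := by
    refine Finset.sum_congr rfl fun u _ => ?_
    rw [hydef]; exact sq_abs _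
  have h1k : (0:ℝ) ≤ 1 - 1/(ω:ℝ) := by
    have : 1/(ω:ℝ) ≤ 1 := by
      rw [div_le_one (by linarith)]; linarith
    linarith
  have chain : μ * ∑ u, x u ^ 2 ≤ ((1 - 1/(ω:ℝ)) * n) * ∑ u, x u ^ 2 := by
    calc μ * ∑ u, x u ^ 2 = ∑ u, ∑ v, A u v * x u * x v := hQeq.symm
      _ ≤ ∑ u, ∑ v, B u v * y u * y v := hQle
      _ ≤ (1 - 1/(ω:ℝ)) * (∑ u, y u)^2 := hMS
      _ ≤ (1 - 1/(ω:ℝ)) * ((n:ℝ) * ∑ u, y u ^ 2) := by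
          exact mul_le_mul_of_nonneg_left hCS h1k
      _ = ((1 - 1/(ω:ℝ)) * n) * ∑ u, x u ^ 2 := by rw [hyx]; ring
  exact le_of_mul_le_mul_right chain hT
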